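/- arXiv:1902.01656 — 10 statements merged into one kernel-verified Lean document; each statement's English description precedes it below -/
import Mathlib

section
/- A join-semilattice is GS-distributive if and only if it is K-distributive and downward directed. -/
theorem stmt_5 {J : Type*} [SemilatticeSup J] :
    (∀ a b x : J, x ≤ a ⊔ b → ∃ a' b' : J, a' ≤ a ∧ b' ≤ b ∧ x = a' ⊔ b') ↔
    ((∀ a b x : J, x ≤ a ⊔ b → ¬ x ≤ a → ¬ x ≤ b →
        ∃ a' b' : J, a' ≤ a ∧ b' ≤ b ∧ x = a' ⊔ b') ∧
      (∀ a b : J, ∃ c : J, c ≤ a ∧ c ≤ b)) := by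
  constructor
  · intro h
    refine ⟨fun a b x hx _ _ => h a b x hx, fun a b => ?_⟩
    obtain ⟨a', b', ha, hb, he⟩ := h a b a le_sup_left
    exact ⟨b', he ▸ le_sup_right, hb⟩
  · rintro ⟨hK, hD⟩ a b x hx
    by_cases hxa : x ≤ a
    · obtain ⟨c, hc1, hc2⟩ := hD x b
      exact ⟨x, c, hxa, hc2, (sup_eq_left.mpr hc1).symm⟩
    by_cases hxb : x ≤ b
    · obtain ⟨c, hc1, hc2⟩ := hD x a
      exact ⟨c, x, hc2, hxb, (sup_eq_right.mpr hc1).symm⟩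
    exact hK a b x hx hxa hxb
end

section
/- The three-element join-semilattice {a, b, 1} with a < 1, b < 1, and a, b incomparable, is K-distributive but not GS-distributive. -/
/-- The three-element join-semilattice {a, b, 1} with a < 1, b < 1 and a, b
incomparable is K-distributive but not GS-distributive. -/
theorem stmt_6 {J : Type*} [SemilatticeSup J] (a b one : J)
    (ha : a < one) (hb : b < one) (hab : ¬ a ≤ b) (hba : ¬ b ≤ a)
    (hcard : ∀ x : J, x = a ∨ x = b ∨ x = one) :
    (∀ u v x : J, x ≤ u ⊔ v → ¬ x ≤ u → ¬ x ≤ v →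
        ∃ u' v' : J, u' ≤ u ∧ v' ≤ v ∧ x = u' ⊔ v') ∧
    ¬ (∀ u v x : J, x ≤ u ⊔ v →
        ∃ u' v' : J, u' ≤ u ∧ v' ≤ v ∧ x = u' ⊔ v') := by
  have hsup : a ⊔ b = one := by
    rcases hcard (a ⊔ b) with h | h | h
    · exact absurd (h ▸ le_sup_right) hba
    · exact absurd (h ▸ le_sup_left) hab
    · exact h
  constructor
  · intro u v x hx hxu hxv
    -- u ≠ one, v ≠ one, since otherwise x ≤ u or x ≤ v via x ≤ one
    have hxone : x ≤ one := by
      rcases hcard x with h | h | h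
      · exact h ▸ ha.le
      · exact h ▸ hb.le
      · exact h ▸ le_rfl
    have hu : u = a ∨ u = b := by
      rcases hcard u with h | h | h
      · exact Or.inl h
      · exact Or.inr h
      · exact absurd (h ▸ hxone) hxu
    have hv : v = a ∨ v = b := by
      rcases hcard v with h | h | h
      · exact Or.inl h
      · exact Or.inr h
      · exact absurd (h ▸ hxone) hxv
    -- x must be one
    have hx1 : x = one := by
      rcases hcard x with h | h | h
      · subst h
        rcases hu with h1 | h1 <;> rcases hv with h2 | h2 <;> subst h1 <;> subst h2
        · exact absurd le_rfl hxu
        · exact absurd le_rfl hxu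
        · exact absurd le_rfl hxv
        · exact absurd (by simpa using hx) hab
      · subst h
        rcases hu with h1 | h1 <;> rcases hv with h2 | h2 <;> subst h1 <;> subst h2
        · exact absurd (by simpa using hx) hba
        · exact absurd le_rfl hxv
        · exact absurd le_rfl hxu
        · exact absurd le_rfl hxu
      · exact h
    subst hx1
    refine ⟨u, v, le_rfl, le_rfl, ?_⟩
    rcases hu with h1 | h1 <;> rcases hv with h2 | h2 <;> subst h1 <;> subst h2
    · exact absurd (by simpa using hx) ha.not_ge
    · exact hsup.symm
    · rw [sup_comm] at hx ⊢; exact hsup.symm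
    · exact absurd (by simpa using hx) hb.not_ge
  · intro H
    obtain ⟨u', v', hu', hv', hxy⟩ := H one a b (le_sup_left.trans' hb.le)
    have hv'a : v' = a := by
      rcases hcard v' with h | h | h
      · exact h
      · exact absurd (h ▸ hv') hba
      · exact absurd (h ▸ hv') ha.not_ge
    subst hv'a
    exact hab (hxy ▸ le_sup_right)
end

section
/- Every K-distributive join-semilattice is H-distributive (ND-distributive): for all h, a, b, c, if (for all x, x ≤ h and x ≤ a imply x ≤ c) and (for all x, x ≤ h and x ≤ b imply x ≤ c), then for all x, x ≤ h and x ≤ a ∨ b imply x ≤ c. -/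
theorem stmt_7 {J : Type*} [SemilatticeSup J]
    (hK : ∀ a b x : J, x ≤ a ⊔ b → ¬ x ≤ a → ¬ x ≤ b →
      ∃ a' b' : J, a' ≤ a ∧ b' ≤ b ∧ x = a' ⊔ b') :
    ∀ h a b c : J, (∀ x : J, x ≤ h → x ≤ a → x ≤ c) →
      (∀ x : J, x ≤ h → x ≤ b → x ≤ c) →
      ∀ x : J, x ≤ h → x ≤ a ⊔ b → x ≤ c := by
  intro h a b c ha hb x hxh hxab
  by_cases hxa : x ≤ a
  · exact ha x hxh hxa
  by_cases hxb : x ≤ b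
  · exact hb x hxh hxb
  obtain ⟨a', b', ha', hb', hx⟩ := hK a b x hxab hxa hxb
  have hah : a' ≤ x := hx ▸ le_sup_left
  have hbh : b' ≤ x := hx ▸ le_sup_right
  rw [hx]
  exact sup_le (ha a' (hah.trans hxh) ha') (hb b' (hbh.trans hxh) hb')
end

section
/- For finite join-semilattices, H-distributivity (condition D∨) implies K-distributivity; hence in the finite case the two notions coincide. -/
open Classical in
theorem stmt_8 {J : Type*} [SemilatticeSup J] [Fintype J]
    (hH : ∀ h a b c : J, (∀ x : J, x ≤ h → x ≤ a → x ≤ c) →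
      (∀ x : J, x ≤ h → x ≤ b → x ≤ c) →
      ∀ x : J, x ≤ h → x ≤ a ⊔ b → x ≤ c) :
    ∀ a b x : J, x ≤ a ⊔ b → ¬ x ≤ a → ¬ x ≤ b →
      ∃ a' b' : J, a' ≤ a ∧ b' ≤ b ∧ x = a' ⊔ b' := by
  intro a b x hxab hxa hxb
  have hSa : ∃ y : J, y ≤ x ∧ y ≤ a := by
    by_contra h
    push_neg at h
    exact hxb (hH x a b b (fun y hy hya => absurd hya (h y hy))
      (fun y _ hyb => hyb) x le_rfl hxab)
  have hSb : ∃ y : J, y ≤ x ∧ y ≤ b := by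
    by_contra h
    push_neg at h
    exact hxa (hH x a b a (fun y _ hya => hya)
      (fun y hy hyb => absurd hyb (h y hy)) x le_rfl hxab)
  set Sa := Finset.univ.filter (fun y : J => y ≤ x ∧ y ≤ a) with hSadef
  set Sb := Finset.univ.filter (fun y : J => y ≤ x ∧ y ≤ b) with hSbdef
  have hna : Sa.Nonempty := by
    obtain ⟨y, hy⟩ := hSa
    exact ⟨y, by simp [hSadef, hy.1, hy.2]⟩
  have hnb : Sb.Nonempty := by
    obtain ⟨y, hy⟩ := hSb
    exact ⟨y, by simp [hSbdef, hy.1, hy.2]⟩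
  refine ⟨Sa.sup' hna id, Sb.sup' hnb id, ?_, ?_, ?_⟩
  · exact Finset.sup'_le _ _ fun y hy => (Finset.mem_filter.mp hy).2.2
  · exact Finset.sup'_le _ _ fun y hy => (Finset.mem_filter.mp hy).2.2
  · apply le_antisymm
    · refine hH x a b _ ?_ ?_ x le_rfl hxab
      · intro y hy hya
        exact le_sup_of_le_left (Finset.le_sup' (f := id) (Finset.mem_filter.mpr ⟨Finset.mem_univ y, hy, hya⟩))
      · intro y hy hyb
        exact le_sup_of_le_right (Finset.le_sup' (f := id) (Finset.mem_filter.mpr ⟨Finset.mem_univ y, hy, hyb⟩))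
    · exact sup_le (Finset.sup'_le _ _ fun y hy => (Finset.mem_filter.mp hy).2.1)
        (Finset.sup'_le _ _ fun y hy => (Finset.mem_filter.mp hy).2.1)
end

section
/- A join-semilattice satisfies condition (LR) — for all a, b, c: {c, a∨b}^l ⊆ ({c,a}^l ∪ {c,b}^l)^{ul} — if and only if it satisfies condition (D∨) — for all h, a, b, c: if {h,a}^l ∪ {h,b}^l ⊆ {c}^l then {h, a∨b}^l ⊆ {c}^l. -/
theorem stmt_10 {J : Type*} [SemilatticeSup J] :
    (∀ a b c : J, lowerBounds {c, a ⊔ b} ⊆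
        lowerBounds (upperBounds (lowerBounds {c, a} ∪ lowerBounds {c, b}))) ↔
    (∀ h a b c : J, lowerBounds {h, a} ∪ lowerBounds {h, b} ⊆ lowerBounds {c} →
        lowerBounds {h, a ⊔ b} ⊆ lowerBounds {c}) := by
  constructor
  · intro LR h a b c hsub x hx z hz
    rw [Set.mem_singleton_iff] at hz; subst hz
    have hc : z ∈ upperBounds (lowerBounds {h, a} ∪ lowerBounds {h, b}) :=
      fun y hy => hsub hy (Set.mem_singleton z)
    exact LR a b h hx hc
  · intro D a b c x hx u hu
    have hsub : lowerBounds {c, a} ∪ lowerBounds {c, b} ⊆ lowerBounds {u} := by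
      intro y hy z hz
      rw [Set.mem_singleton_iff] at hz; subst hz
      exact hu hy
    exact D c a b u hsub hx (Set.mem_singleton u)
end

section
/- Every H-distributive join-semilattice is B-distributive: if H-distributivity holds and a ∧ b exists, then inf{x ∨ a, x ∨ b} exists and equals x ∨ (a ∧ b), for all x. -/
theorem stmt_14 {J : Type*} [SemilatticeSup J]
    (hH : ∀ h a b c : J, (∀ y : J, y ≤ h → y ≤ a → y ≤ c) →
      (∀ y : J, y ≤ h → y ≤ b → y ≤ c) →
      ∀ y : J, y ≤ h → y ≤ a ⊔ b → y ≤ c) :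
    ∀ a b m x : J, IsGLB {a, b} m → IsGLB {x ⊔ a, x ⊔ b} (x ⊔ m) := by
  intro a b m x hm
  have hma : m ≤ a := hm.1 (by simp)
  have hmb : m ≤ b := hm.1 (by simp)
  constructor
  · intro z hz
    simp only [Set.mem_insert_iff, Set.mem_singleton_iff] at hz
    rcases hz with rfl | rfl
    · exact sup_le_sup_left hma x
    · exact sup_le_sup_left hmb x
  · intro z hz
    have hza : z ≤ x ⊔ a := hz (by simp)
    have hzb : z ≤ x ⊔ b := hz (by simp)
    have key : ∀ y : J, y ≤ z → y ≤ a → y ≤ x ⊔ m := by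
      intro y hyz hya
      have := hH y x b (x ⊔ m)
        (fun w _ hwx => le_sup_of_le_left hwx)
        (fun w hwy hwb => le_sup_of_le_right
          (hm.2 (by rintro t (rfl | rfl) <;> simp at * <;>
            [exact hwy.trans hya; exact hwb])))
      exact this y le_rfl (hyz.trans hzb)
    exact hH z x a (x ⊔ m) (fun w _ hwx => le_sup_of_le_left hwx) key z le_rfl hza
end

section
/- The four-element join-semilattice with bottom elements a, b, c pairwise incomparable and top element 1 = a∨b = a∨c = b∨c is B-distributive (indeed S_n-distributive for all n) but not H-distributive. -/
/-- The four-element join-semilattice with pairwise incomparable bottoms a, b, c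
and top 1 = a ⊔ b = a ⊔ c = b ⊔ c is B-distributive (indeed Sₙ-distributive for
all n) but not H-distributive. -/
theorem stmt_15 {J : Type*} [SemilatticeSup J] (a b c one : J)
    (hab : ¬ a ≤ b) (hba : ¬ b ≤ a) (hac : ¬ a ≤ c) (hca : ¬ c ≤ a)
    (hbc : ¬ b ≤ c) (hcb : ¬ c ≤ b)
    (h1 : a ⊔ b = one) (h2 : a ⊔ c = one) (h3 : b ⊔ c = one)
    (hcard : ∀ x : J, x = a ∨ x = b ∨ x = c ∨ x = one) :
    (∀ (s : Finset J) (x m : J), s.Nonempty → IsGLB (s : Set J) m →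
        IsGLB ((fun y => x ⊔ y) '' (s : Set J)) (x ⊔ m)) ∧
    ¬ (∀ h u v w : J, (∀ y : J, y ≤ h → y ≤ u → y ≤ w) →
        (∀ y : J, y ≤ h → y ≤ v → y ≤ w) →
        ∀ y : J, y ≤ h → y ≤ u ⊔ v → y ≤ w) := by
  have htop : ∀ x : J, x ≤ one := by
    intro x
    rcases hcard x with h | h | h | h <;> subst h
    · exact h1 ▸ le_sup_left
    · exact h1 ▸ le_sup_right
    · exact h2 ▸ le_sup_right
    · exact le_rfl
  -- helper: a GLB of a set in this lattice belongs to the set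
  have key : ∀ p q r : J, ¬ p ≤ q → ¬ p ≤ r → p ≠ one →
      (∀ x : J, x = p ∨ x = q ∨ x = r ∨ x = one) →
      ∀ (s : Finset J), IsGLB (s : Set J) p → p ∈ s := by
    intro p q r hpq hpr hpone hc s hglb
    by_cases hp : p ∈ s
    · exact hp
    · exfalso
      have hone : one ∈ lowerBounds (s : Set J) := by
        intro y hy
        have hpy : p ≤ y := hglb.1 hy
        rcases hc y with h | h | h | h <;> subst h
        · exact absurd hy hp
        · exact absurd hpy hpq
        · exact absurd hpy hpr
        · exact le_rfl
      exact hpone (le_antisymm (htop p) (hglb.2 hone))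
  have hmem : ∀ (s : Finset J) (m : J), s.Nonempty → IsGLB (s : Set J) m → m ∈ s := by
    intro s m hs hglb
    rcases hcard m with h | h | h | h <;> rw [h] at hglb ⊢
    · refine key a b c hab hac ?_ hcard s hglb
      intro h; exact hba (h ▸ htop b)
    · refine key b a c hba hbc ?_ (fun x => by rcases hcard x with h|h|h|h <;> tauto) s hglb
      intro h; exact hab (h ▸ htop a)
    · refine key c a b hca hcb ?_ (fun x => by rcases hcard x with h|h|h|h <;> tauto) s hglb
      intro h; exact hac (h ▸ htop a)
    · obtain ⟨y0, hy0⟩ := hs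
      have : y0 = one := le_antisymm (htop y0) (hglb.1 hy0)
      exact this ▸ hy0
  constructor
  · intro s x m hs hglb
    have hm : m ∈ s := hmem s m hs hglb
    refine IsLeast.isGLB ⟨⟨m, hm, rfl⟩, ?_⟩
    rintro z ⟨y, hy, rfl⟩
    exact sup_le_sup_left (hglb.1 hy) x
  · intro H
    have h2' : ∀ y : J, y ≤ c → y ≤ b → y ≤ a := by
      intro y hyc hyb
      rcases hcard y with h | h | h | h
      · exact h.le
      · rw [h] at hyc; exact absurd hyc hbc
      · rw [h] at hyb; exact absurd hyb hcb
      · rw [h] at hyc; exact absurd (le_trans (h1 ▸ le_sup_left : a ≤ one) hyc) hac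
    have := H c a b a (fun y _ hya => hya) h2' c le_rfl (h1 ▸ htop c)
    exact hca this
end

section
/- Every join-semilattice equipped with an arrow operation is H-distributive: if for all a, b there exists a → b = max{c : ∀x, x ≤ a and x ≤ c imply x ≤ b}, then condition (D∨) holds. -/
theorem stmt_16 {J : Type*} [SemilatticeSup J]
    (harrow : ∀ a b : J, ∃ m : J, IsGreatest {c : J | ∀ x : J, x ≤ a → x ≤ c → x ≤ b} m) :
    ∀ h a b c : J, (∀ x : J, x ≤ h → x ≤ a → x ≤ c) →
      (∀ x : J, x ≤ h → x ≤ b → x ≤ c) →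
      ∀ x : J, x ≤ h → x ≤ a ⊔ b → x ≤ c := by
  intro h a b c ha hb x hxh hxab
  obtain ⟨m, hm, hub⟩ := harrow h c
  have hab : a ⊔ b ≤ m := sup_le (hub ha) (hub hb)
  exact hm x hxh (hxab.trans hab)
end

section
/- Every finite H-distributive join-semilattice has an arrow: for all a, b there exists an element a → b which is the maximum of the set {c : ∀x, x ≤ a and x ≤ c imply x ≤ b}. -/
theorem stmt_17 {J : Type*} [SemilatticeSup J] [Fintype J]
    (hH : ∀ h a b c : J, (∀ x : J, x ≤ h → x ≤ a → x ≤ c) →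
      (∀ x : J, x ≤ h → x ≤ b → x ≤ c) →
      ∀ x : J, x ≤ h → x ≤ a ⊔ b → x ≤ c) :
    ∀ a b : J, ∃ m : J, IsGreatest {c : J | ∀ x : J, x ≤ a → x ≤ c → x ≤ b} m := by
  classical
  intro a b
  set S : Finset J := Finset.univ.filter (fun c => ∀ x : J, x ≤ a → x ≤ c → x ≤ b) with hS
  have hbS : b ∈ S := by
    simp only [hS, Finset.mem_filter, Finset.mem_univ, true_and]
    exact fun x _ h => h
  have hne : S.Nonempty := ⟨b, hbS⟩
  refine ⟨S.sup' hne id, ?_, ?_⟩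
  · have := Finset.sup'_induction (p := fun c => ∀ x : J, x ≤ a → x ≤ c → x ≤ b)
      hne id ?_ ?_
    · exact this
    · intro c hc d hd
      exact fun x hxa hx => hH a c d b (fun y hya hyc => hc y hya hyc)
        (fun y hya hyd => hd y hya hyd) x hxa hx
    · intro c hc
      simpa [hS] using hc
  · intro c hc
    have : c ∈ S := by simpa [hS] using hc
    exact Finset.le_sup' id this
end

section
/- Let L = {0, 1/2, 1} with the usual order, and let J = L × L with the product order, viewed as a Heyting algebra. The subset B = (L × L) \ {(0,1/2), (1/2,0)} is closed under join and under the Heyting implication of J, but the set {(c,d) ∈ B : ∀(x,y) ∈ B, (x,y) ≤ (c,d) and (x,y) ≤ (1/2,1/2) imply (x,y) ≤ (0,0)} has no maximum element; hence B, as a join-semilattice, admits no arrow for the pair ((1/2,1/2), (0,0)). -/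
/-- The three-element chain L = {0, 1/2, 1} ⊆ ℚ with the usual order. -/
def Lchain : Set ℚ := {0, 1/2, 1}

def e0 : Lchain := ⟨0, by simp [Lchain]⟩
def eh : Lchain := ⟨1/2, by simp [Lchain]⟩
def e1 : Lchain := ⟨1, by simp [Lchain]⟩

/-- The Gödel implication on the chain L. -/
noncomputable def godel (x y : Lchain) : Lchain :=
  if (x : ℚ) ≤ (y : ℚ) then e1 else y

/-- The Heyting implication on J = L × L, computed componentwise. -/
noncomputable def himp2 (p q : Lchain × Lchain) : Lchain × Lchain :=
  (godel p.1 q.1, godel p.2 q.2)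

/-- The subset B = (L × L) \ {(0,1/2), (1/2,0)}. -/
def Bset : Set (Lchain × Lchain) := {p | p ≠ (e0, eh) ∧ p ≠ (eh, e0)}

lemma lcases (x : Lchain) : x = e0 ∨ x = eh ∨ x = e1 := by
  obtain ⟨v, hv⟩ := x
  simp only [Lchain, Set.mem_insert_iff, Set.mem_singleton_iff] at hv
  rcases hv with h|h|h
  · exact Or.inl (Subtype.ext h)
  · exact Or.inr (Or.inl (Subtype.ext h))
  · exact Or.inr (Or.inr (Subtype.ext h))

lemma coe_max (x y : Lchain) : ((max x y : Lchain) : ℚ) = max (x : ℚ) (y : ℚ) := by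
  rcases le_total x y with h|h
  · rw [max_eq_right h, max_eq_right (Subtype.coe_le_coe.mpr h)]
  · rw [max_eq_left h, max_eq_left (Subtype.coe_le_coe.mpr h)]

lemma mem_B_iff (p : Lchain × Lchain) :
    p ∈ Bset ↔ ¬((p.1 : ℚ) = 0 ∧ (p.2 : ℚ) = 1/2) ∧ ¬((p.1 : ℚ) = 1/2 ∧ (p.2 : ℚ) = 0) := by
  unfold Bset
  simp only [Set.mem_setOf_eq, Ne, Prod.ext_iff, Subtype.ext_iff, e0, eh]

lemma mem01 : (e0, e1) ∈ {p | p ∈ Bset ∧ ∀ q ∈ Bset, q ≤ p → q ≤ (eh, eh) → q ≤ (e0, e0)} := by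
  constructor
  · rw [mem_B_iff]; simp only [e0, e1]; norm_num
  · rintro ⟨q1, q2⟩ hq hle1 hle2
    rw [mem_B_iff] at hq
    rcases lcases q1 with h|h|h <;> subst h <;>
      rcases lcases q2 with h|h|h <;> subst h <;>
      simp only [Prod.mk_le_mk, Subtype.mk_le_mk, e0, eh, e1] at hq hle1 hle2 ⊢ <;>
      norm_num at *

lemma mem10 : (e1, e0) ∈ {p | p ∈ Bset ∧ ∀ q ∈ Bset, q ≤ p → q ≤ (eh, eh) → q ≤ (e0, e0)} := by
  constructor
  · rw [mem_B_iff]; simp only [e0, e1]; norm_num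
  · rintro ⟨q1, q2⟩ hq hle1 hle2
    rw [mem_B_iff] at hq
    rcases lcases q1 with h|h|h <;> subst h <;>
      rcases lcases q2 with h|h|h <;> subst h <;>
      simp only [Prod.mk_le_mk, Subtype.mk_le_mk, e0, eh, e1] at hq hle1 hle2 ⊢ <;>
      norm_num at *

/-- B is closed under join and Heyting implication, but the set of candidates
for the arrow (1/2,1/2) → (0,0) within B has no greatest element. -/
theorem stmt_19 :
    (∀ p ∈ Bset, ∀ q ∈ Bset, p ⊔ q ∈ Bset) ∧
    (∀ p ∈ Bset, ∀ q ∈ Bset, himp2 p q ∈ Bset) ∧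
    ¬ ∃ m : Lchain × Lchain,
        IsGreatest {p | p ∈ Bset ∧ ∀ q ∈ Bset, q ≤ p → q ≤ (eh, eh) → q ≤ (e0, e0)} m := by
  refine ⟨?_, ?_, ?_⟩
  · rintro ⟨p1, p2⟩ hp ⟨q1, q2⟩ hq
    rw [mem_B_iff] at hp hq ⊢
    rw [Prod.mk_sup_mk]
    simp only [coe_max] at *
    rcases lcases p1 with h|h|h <;> subst h <;>
      rcases lcases p2 with h|h|h <;> subst h <;>
      rcases lcases q1 with h|h|h <;> subst h <;>
      rcases lcases q2 with h|h|h <;> subst h <;>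
      simp only [e0, eh, e1] at hp hq ⊢ <;> norm_num at *
  · rintro ⟨p1, p2⟩ hp ⟨q1, q2⟩ hq
    rw [mem_B_iff] at hp hq ⊢
    rcases lcases p1 with h|h|h <;> subst h <;>
      rcases lcases p2 with h|h|h <;> subst h <;>
      rcases lcases q1 with h|h|h <;> subst h <;>
      rcases lcases q2 with h|h|h <;> subst h <;>
      simp only [himp2, godel, e0, eh, e1] at hp hq ⊢ <;> norm_num at *
  · rintro ⟨m, ⟨hmB, hmax⟩, hub⟩
    have hm1 := hub mem01
    have hm2 := hub mem10
    obtain ⟨m1, m2⟩ := m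
    rw [Prod.mk_le_mk] at hm1 hm2
    have hm1' : m1 = e1 := by
      rcases lcases m1 with h|h|h <;> subst h <;> [skip; skip; rfl] <;>
        · exfalso
          have := hm2.1
          rw [← Subtype.coe_le_coe] at this
          simp only [e0, eh, e1] at this
          norm_num at this
    have hm2' : m2 = e1 := by
      rcases lcases m2 with h|h|h <;> subst h <;> [skip; skip; rfl] <;>
        · exfalso
          have := hm1.2
          rw [← Subtype.coe_le_coe] at this
          simp only [e0, eh, e1] at this
          norm_num at this
    subst hm1'; subst hm2'
    have hbad := hmax (eh, eh)
      (by rw [mem_B_iff]; simp only [eh]; norm_num)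
      (by rw [Prod.mk_le_mk]
          constructor <;> rw [← Subtype.coe_le_coe] <;> simp only [eh, e1] <;> norm_num)
      le_rfl
    rw [Prod.mk_le_mk] at hbad
    have := hbad.1
    rw [← Subtype.coe_le_coe] at this
    simp only [eh, e0] at this
    norm_num at this
end
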